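/- Grazing-angle integral bound for a circle (Lemma 5.4). Let 0 < R < a, set x := (a, 0) ∈ ℝ² and α := arcsin(R/a) ∈ (0, π/2). For u_θ ∈ (0, α] and u := (cos u_θ, sin u_θ), the set {τ > 0 : |x − τu| = R} is nonempty; let t_b(x,u;R) be its infimum and x_b(x,u;R) := x − t_b(x,u;R) u. Then x_b(x,u;R) · u = √(R² − a² sin² u_θ), and ∫_{α/2}^{α} 1/(x_b(x,u;R) · u) du_θ ≤ (1/R) ln(1 + 2R/(a − R)). -/

import Mathlib

open MeasureTheory
open scoped RealInnerProductSpace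
open Real Set intervalIntegral

noncomputable section

abbrev E2 : Type := EuclideanSpace ℝ (Fin 2)

/-- The point of `ℝ²` with coordinates `(p, q)`. -/
def vec2 (p q : ℝ) : E2 := (WithLp.equiv 2 (Fin 2 → ℝ)).symm ![p, q]

/-- Backward exit time `t_b(x, u; R)` for `x = (a,0)` and `u = (cos θ, sin θ)` on the
circle of radius `R` centered at the origin. -/
def tbCir (a R θ : ℝ) : ℝ :=
  sInf {τ : ℝ | 0 < τ ∧ ‖vec2 a 0 - τ • vec2 (Real.cos θ) (Real.sin θ)‖ = R}

/-- Backward exit position `x_b(x, u; R) = x − t_b(x,u;R) u`. -/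
def xbCir (a R θ : ℝ) : E2 :=
  vec2 a 0 - tbCir a R θ • vec2 (Real.cos θ) (Real.sin θ)

lemma norm_vec2 (p q : ℝ) : ‖vec2 p q‖ = Real.sqrt (p^2 + q^2) := by
  rw [EuclideanSpace.norm_eq]; simp [vec2, Fin.sum_univ_two, sq]

lemma inner_vec2 (p q r s : ℝ) : ⟪vec2 p q, vec2 r s⟫ = p*r + q*s := by
  simp [vec2, PiLp.inner_apply, Fin.sum_univ_two]; ring

lemma vec2_sub_smul (a τ p q : ℝ) : vec2 a 0 - τ • vec2 p q = vec2 (a - τ*p) (-(τ*q)) := by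
  apply PiLp.ext; intro i; fin_cases i <;> simp [vec2]

lemma norm_cond_iff (a R θ τ : ℝ) (hR : 0 ≤ R) :
    ‖vec2 a 0 - τ • vec2 (Real.cos θ) (Real.sin θ)‖ = R ↔
      (τ - a * Real.cos θ)^2 = R^2 - a^2 * Real.sin θ^2 := by
  rw [vec2_sub_smul, norm_vec2]
  have hpyt := Real.sin_sq_add_cos_sq θ
  constructor
  · intro h
    have h2 : (a - τ*Real.cos θ)^2 + (-(τ*Real.sin θ))^2 = R^2 := by
      rw [← h]; rw [Real.sq_sqrt (by positivity)]
    linear_combination h2 + (a^2 - τ^2)*hpyt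
  · intro h
    have h2 : (a - τ*Real.cos θ)^2 + (-(τ*Real.sin θ))^2 = R^2 := by
      linear_combination h + (τ^2 - a^2)*hpyt
    rw [h2, Real.sqrt_sq hR]

lemma part1 (a R θ : ℝ) (hR : 0 < R) (hRa : R < a) (hθ : θ ∈ Set.Ioc 0 (Real.arcsin (R/a))) :
    ({τ : ℝ | 0 < τ ∧ ‖vec2 a 0 - τ • vec2 (Real.cos θ) (Real.sin θ)‖ = R}).Nonempty
    ∧ tbCir a R θ = a * Real.cos θ - Real.sqrt (R^2 - a^2 * Real.sin θ^2)
    ∧ ⟪xbCir a R θ, vec2 (Real.cos θ) (Real.sin θ)⟫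
        = Real.sqrt (R^2 - a^2 * Real.sin θ^2) := by
  have ha : 0 < a := hR.trans hRa
  have hRa1 : R / a < 1 := (div_lt_one ha).2 hRa
  have hRa0 : 0 < R / a := div_pos hR ha
  have hα2 : Real.arcsin (R/a) < π/2 := Real.arcsin_lt_pi_div_two.2 hRa1
  have hθpos := hθ.1
  have hθle := hθ.2
  have hθlt : θ < π/2 := lt_of_le_of_lt hθle hα2
  have hsin_arcsin : Real.sin (Real.arcsin (R/a)) = R/a :=
    Real.sin_arcsin (by linarith) hRa1.le
  have hsθ : Real.sin θ ≤ R / a := by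
    rw [← hsin_arcsin]
    apply Real.strictMonoOn_sin.monotoneOn ⟨by linarith [Real.pi_pos], hθlt.le⟩
      ⟨by linarith [Real.arcsin_nonneg.2 hRa0.le, Real.pi_pos], hα2.le⟩ hθle
  have hsθ0 : 0 ≤ Real.sin θ := Real.sin_nonneg_of_nonneg_of_le_pi hθpos.le
    (by linarith [Real.pi_pos])
  have hcθ : 0 < Real.cos θ := Real.cos_pos_of_mem_Ioo ⟨by linarith [Real.pi_pos], hθlt⟩
  set D := R^2 - a^2 * Real.sin θ^2 with hD
  have hDnn : 0 ≤ D := by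
    have : a * Real.sin θ ≤ R := by
      have := mul_le_mul_of_nonneg_left hsθ ha.le
      rwa [mul_div_cancel₀ _ ha.ne'] at this
    nlinarith [this, mul_nonneg ha.le hsθ0]
  have hpyt := Real.sin_sq_add_cos_sq θ
  have hDlt : D < (a * Real.cos θ)^2 := by nlinarith
  have hsqrtD : Real.sqrt D < a * Real.cos θ := by
    rw [Real.sqrt_lt' (by positivity)]; exact hDlt
  have hsqrtDnn : 0 ≤ Real.sqrt D := Real.sqrt_nonneg _
  have hsq : Real.sqrt D ^ 2 = D := Real.sq_sqrt hDnn
  have hset : {τ : ℝ | 0 < τ ∧ ‖vec2 a 0 - τ • vec2 (Real.cos θ) (Real.sin θ)‖ = R}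
      = {a*Real.cos θ - Real.sqrt D, a*Real.cos θ + Real.sqrt D} := by
    ext τ
    rw [Set.mem_setOf_eq, norm_cond_iff _ _ _ _ hR.le]
    constructor
    · rintro ⟨-, heq⟩
      have habs : |τ - a*Real.cos θ| = Real.sqrt D := by
        rw [← Real.sqrt_sq_eq_abs, heq]
      rcases abs_eq hsqrtDnn |>.1 habs with h | h
      · right; simp only [Set.mem_singleton_iff]; linarith
      · left; linarith
    · intro h
      simp only [Set.mem_insert_iff, Set.mem_singleton_iff] at h
      rcases h with h | h <;> subst h
      · refine ⟨by linarith, ?_⟩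
        rw [show a*Real.cos θ - Real.sqrt D - a*Real.cos θ = -(Real.sqrt D) by ring, neg_sq]
        exact hsq
      · refine ⟨by linarith, ?_⟩
        rw [show a*Real.cos θ + Real.sqrt D - a*Real.cos θ = Real.sqrt D by ring]
        exact hsq
  have hne : ({τ : ℝ | 0 < τ ∧ ‖vec2 a 0 - τ • vec2 (Real.cos θ) (Real.sin θ)‖ = R}).Nonempty := by
    rw [hset]; exact ⟨_, Set.mem_insert _ _⟩
  have htb : tbCir a R θ = a * Real.cos θ - Real.sqrt D := by
    rw [tbCir, hset, csInf_pair]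
    exact min_eq_left (by linarith)
  refine ⟨hne, htb, ?_⟩
  rw [xbCir, inner_sub_left, real_inner_smul_left, inner_vec2, inner_vec2, htb]
  linear_combination (Real.sqrt D - a*Real.cos θ) * hpyt

lemma sin_lower (A θ : ℝ) (h0 : 0 ≤ θ) (hθ : θ ≤ A) (hA : A ≤ π/2) :
    Real.cos A * (A - θ) ≤ Real.sin A - Real.sin θ := by
  have hd : ∀ t : ℝ, HasDerivAt (fun t => Real.sin t - Real.cos A * t)
      (Real.cos t - Real.cos A) t := by
    intro t
    exact ((Real.hasDerivAt_sin t).sub ((hasDerivAt_id t).const_mul (Real.cos A))).congr_deriv (by simp)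
  have hmono : MonotoneOn (fun t => Real.sin t - Real.cos A * t) (Icc 0 A) := by
    apply monotoneOn_of_deriv_nonneg (convex_Icc 0 A)
    · exact (Real.continuous_sin.sub (continuous_const.mul continuous_id)).continuousOn
    · intro t ht
      exact (hd t).differentiableAt.differentiableWithinAt
    · intro t ht
      rw [interior_Icc] at ht
      rw [(hd t).deriv]
      have : Real.cos A ≤ Real.cos t :=
        Real.cos_le_cos_of_nonneg_of_le_pi ht.1.le (by linarith [Real.pi_pos]) (le_of_lt ht.2)
      linarith
  have := hmono ⟨h0, hθ⟩ ⟨le_trans h0 hθ, le_refl A⟩ hθ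
  simp only at this
  linarith

set_option maxHeartbeats 1000000 in
lemma part2 (a R : ℝ) (hR : 0 < R) (hRa : R < a) :
    (∫ θ in (Real.arcsin (R / a) / 2)..(Real.arcsin (R / a)),
        (Real.sqrt (R ^ 2 - a ^ 2 * Real.sin θ ^ 2))⁻¹)
      ≤ (1 / R) * Real.log (1 + 2 * R / (a - R)) := by
  have ha : 0 < a := hR.trans hRa
  have hRa1 : R / a < 1 := (div_lt_one ha).2 hRa
  have hRa0 : 0 < R / a := div_pos hR ha
  set α := Real.arcsin (R / a) with hαdef
  have hα0 : 0 < α := Real.arcsin_pos.2 hRa0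
  have hα2 : α < π / 2 := Real.arcsin_lt_pi_div_two.2 hRa1
  have hsinα : Real.sin α = R / a := Real.sin_arcsin (by linarith) hRa1.le
  have hasinα : a * Real.sin α = R := by rw [hsinα]; field_simp
  have hcosα : 0 < Real.cos α := Real.cos_pos_of_mem_Ioo ⟨by linarith [Real.pi_pos], hα2⟩
  set σ := α / 2 with hσdef
  have hσ0 : 0 < σ := by positivity
  have hσα : σ ≤ α := by linarith
  set s := Real.sin σ with hsdef
  have hs0 : 0 < s := Real.sin_pos_of_pos_of_lt_pi hσ0 (by linarith [Real.pi_pos])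
  -- a·s ≥ R/2
  have hsinα2 : Real.sin α = 2 * s * Real.cos σ := by
    have h2σ : (2:ℝ) * σ = α := by rw [hσdef]; ring
    rw [hsdef, ← Real.sin_two_mul, h2σ]
  have hcosσ1 : Real.cos σ ≤ 1 := Real.cos_le_one σ
  have has : R / 2 ≤ a * s := by
    have h1 : Real.sin α ≤ 2 * s := by nlinarith
    nlinarith
  set b := Real.sqrt (a ^ 2 - R ^ 2) with hbdef
  have hb0 : 0 < b := Real.sqrt_pos.2 (by nlinarith)
  have hacosα : a * Real.cos α = b := by
    rw [Real.cos_arcsin]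
    rw [show a * Real.sqrt (1 - (R/a)^2) = Real.sqrt (a^2) * Real.sqrt (1 - (R/a)^2) from by
      rw [Real.sqrt_sq ha.le]]
    rw [← Real.sqrt_mul (sq_nonneg a)]
    congr 1
    field_simp
  -- W and its properties
  set W := fun θ : ℝ => R ^ 2 - a ^ 2 * Real.sin θ ^ 2 with hWdef
  have hWα : W α = 0 := by simp only [hWdef, hsinα]; field_simp; ring
  have hsinmono : ∀ θ ∈ Icc σ α, s ≤ Real.sin θ := by
    intro θ hθ
    exact Real.strictMonoOn_sin.monotoneOn
      ⟨by linarith [Real.pi_pos], by linarith⟩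
      ⟨by linarith [Real.pi_pos, hθ.1, hθ.2], by linarith [hθ.2]⟩ hθ.1
  have hsinleα : ∀ θ ∈ Icc σ α, Real.sin θ ≤ Real.sin α := by
    intro θ hθ
    exact Real.strictMonoOn_sin.monotoneOn
      ⟨by linarith [Real.pi_pos, hθ.1], by linarith [hθ.2]⟩
      ⟨by linarith [Real.pi_pos], by linarith⟩ hθ.2
  have hsin0 : ∀ θ ∈ Icc σ α, 0 < Real.sin θ := fun θ hθ => lt_of_lt_of_le hs0 (hsinmono θ hθ)
  have hWnn : ∀ θ ∈ Icc σ α, 0 ≤ W θ := by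
    intro θ hθ
    have h1 := hsinleα θ hθ
    have h2 := (hsin0 θ hθ).le
    have h3 : a * Real.sin θ ≤ R := by
      have := mul_le_mul_of_nonneg_left h1 ha.le
      linarith [hasinα]
    have h4 := mul_nonneg (sub_nonneg.2 h3) (add_nonneg hR.le (mul_nonneg ha.le h2))
    simp only [hWdef]
    nlinarith [h4]
  have hWpos : ∀ θ ∈ Ico σ α, 0 < W θ := by
    intro θ hθ
    have h1 : Real.sin θ < Real.sin α :=
      Real.strictMonoOn_sin ⟨by linarith [Real.pi_pos, hθ.1], by linarith [hθ.2]⟩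
        ⟨by linarith [Real.pi_pos], by linarith⟩ hθ.2
    have h2 := (hsin0 θ ⟨hθ.1, hθ.2.le⟩).le
    have h3 : a * Real.sin θ < R := by
      have := mul_lt_mul_of_pos_left h1 ha
      linarith [hasinα]
    have h4 := mul_pos (sub_pos.2 h3) (lt_of_lt_of_le hR (by linarith [mul_nonneg ha.le h2] : R ≤ R + a * Real.sin θ))
    simp only [hWdef]
    nlinarith [h4]
  -- key lower bound W θ ≥ R * b * (α - θ)
  have hWlb : ∀ θ ∈ Icc σ α, R * b * (α - θ) ≤ W θ := by
    intro θ hθ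
    have h1 : Real.cos α * (α - θ) ≤ Real.sin α - Real.sin θ :=
      sin_lower α θ (by linarith [hθ.1]) hθ.2 hα2.le
    have h2 : b * (α - θ) ≤ a * Real.sin α - a * Real.sin θ := by
      rw [← hacosα]
      have := mul_le_mul_of_nonneg_left h1 ha.le
      nlinarith [this]
    have h3 : 0 < Real.sin θ := hsin0 θ hθ
    have h4 : a * Real.sin θ ≤ R := by
      have := mul_le_mul_of_nonneg_left (hsinleα θ hθ) ha.le
      linarith [hasinα]
    have h5 : 0 ≤ b * (α - θ) := mul_nonneg hb0.le (by linarith [hθ.2])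
    have h6 : b * (α - θ) ≤ R - a * Real.sin θ := by linarith [hasinα]
    have h7 : R ≤ R + a * Real.sin θ := by linarith [mul_pos ha h3]
    simp only [hWdef]
    calc R * b * (α - θ) = (b * (α - θ)) * R := by ring
      _ ≤ (R - a * Real.sin θ) * (R + a * Real.sin θ) :=
          mul_le_mul h6 h7 hR.le (by linarith)
      _ = R ^ 2 - a ^ 2 * Real.sin θ ^ 2 := by ring
  -- switch goal to W notation
  have hgoal : (∫ θ in σ..α, (Real.sqrt (R ^ 2 - a ^ 2 * Real.sin θ ^ 2))⁻¹)
      = ∫ θ in σ..α, (Real.sqrt (W θ))⁻¹ := by simp only [hWdef]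
  rw [hgoal]
  clear_value α σ s b W
  set C := (Real.sqrt (R * b))⁻¹ with hCdef
  have hRb : 0 < R * b := mul_pos hR hb0
  have hC0 : 0 < C := by rw [hCdef]; positivity
  -- integrable comparator
  have hk : IntervalIntegrable (fun θ : ℝ => (α - θ) ^ (-(1/2) : ℝ)) volume σ α := by
    have h0 : IntervalIntegrable (fun x : ℝ => x ^ (-(1/2) : ℝ)) volume 0 (α - σ) :=
      intervalIntegral.intervalIntegrable_rpow' (by norm_num)
    have h1 := h0.comp_sub_left α
    simpa using h1.symm
  -- pointwise bound for f
  have hfle : ∀ θ ∈ Ioc σ α, (Real.sqrt (W θ))⁻¹ ≤ C * (α - θ) ^ (-(1/2) : ℝ) := by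
    intro θ hθ
    rcases eq_or_lt_of_le hθ.2 with rfl | hlt
    · rw [hWα, Real.sqrt_zero, inv_zero, sub_self, Real.zero_rpow (by norm_num), mul_zero]
    · have hi : θ ∈ Icc σ α := ⟨hθ.1.le, hθ.2⟩
      have hΔ : 0 < α - θ := by linarith
      have h2 : Real.sqrt (R * b * (α - θ)) ≤ Real.sqrt (W θ) := Real.sqrt_le_sqrt (hWlb θ hi)
      have h3 : 0 < Real.sqrt (R * b * (α - θ)) := Real.sqrt_pos.2 (by positivity)
      have h4 : (Real.sqrt (W θ))⁻¹ ≤ (Real.sqrt (R * b * (α - θ)))⁻¹ :=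
        inv_anti₀ h3 h2
      have h5 : (Real.sqrt (R * b * (α - θ)))⁻¹ = C * (α - θ) ^ (-(1/2) : ℝ) := by
        rw [Real.sqrt_mul hRb.le, mul_inv, hCdef]
        congr 1
        rw [Real.sqrt_eq_rpow, ← Real.rpow_neg hΔ.le]
      rw [← h5]; exact h4
  -- measurability of f
  have hfm : Measurable fun θ : ℝ => (Real.sqrt (W θ))⁻¹ := by
    apply Measurable.inv
    apply Real.continuous_sqrt.measurable.comp
    simp only [hWdef]
    fun_prop
  have hfnn : ∀ θ, 0 ≤ (Real.sqrt (W θ))⁻¹ := fun θ => by positivity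
  have hfint : IntervalIntegrable (fun θ => (Real.sqrt (W θ))⁻¹) volume σ α := by
    apply (hk.const_mul C).mono_fun hfm.aestronglyMeasurable
    rw [uIoc_of_le hσα]
    refine (ae_restrict_iff' measurableSet_Ioc).2 (Filter.Eventually.of_forall fun θ hθ => ?_)
    simp only [Real.norm_eq_abs]
    rw [abs_of_nonneg (hfnn θ)]
    exact le_trans (hfle θ hθ) (le_abs_self _)
  -- define g
  set g := fun θ : ℝ => Real.sin θ * (s * Real.sqrt (W θ))⁻¹ with hgdef
  have hgnn : ∀ θ ∈ Icc σ α, 0 ≤ g θ := by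
    intro θ hθ
    have := (hsin0 θ hθ).le
    simp only [hgdef]
    positivity
  have hgle : ∀ θ ∈ Ioc σ α, g θ ≤ (s⁻¹ * C) * (α - θ) ^ (-(1/2) : ℝ) := by
    intro θ hθ
    have h1 : Real.sin θ ≤ 1 := Real.sin_le_one θ
    have h2 : 0 ≤ (Real.sqrt (W θ))⁻¹ := hfnn θ
    have h3 := hfle θ hθ
    have h4 : g θ = Real.sin θ * s⁻¹ * (Real.sqrt (W θ))⁻¹ := by simp only [hgdef, mul_inv]; ring
    have h5 : Real.sin θ * s⁻¹ ≤ s⁻¹ := by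
      have := mul_le_mul_of_nonneg_right h1 (inv_nonneg.2 hs0.le)
      linarith
    calc g θ ≤ s⁻¹ * (Real.sqrt (W θ))⁻¹ := by
          rw [h4]; exact mul_le_mul_of_nonneg_right h5 h2
      _ ≤ s⁻¹ * (C * (α - θ) ^ (-(1/2) : ℝ)) :=
          mul_le_mul_of_nonneg_left h3 (inv_nonneg.2 hs0.le)
      _ = (s⁻¹ * C) * (α - θ) ^ (-(1/2) : ℝ) := by ring
  have hgm : Measurable g := by
    simp only [hgdef]
    apply Real.measurable_sin.mul
    apply Measurable.inv
    apply (measurable_const.mul (Real.continuous_sqrt.measurable.comp _))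
    simp only [hWdef]
    fun_prop
  have hgint : IntervalIntegrable g volume σ α := by
    apply (hk.const_mul (s⁻¹ * C)).mono_fun hgm.aestronglyMeasurable
    rw [uIoc_of_le hσα]
    refine (ae_restrict_iff' measurableSet_Ioc).2 (Filter.Eventually.of_forall fun θ hθ => ?_)
    simp only [Real.norm_eq_abs]
    rw [abs_of_nonneg (hgnn θ ⟨hθ.1.le, hθ.2⟩)]
    exact le_trans (hgle θ hθ) (le_abs_self _)
  -- f ≤ g on Icc
  have hfg : ∀ θ ∈ Icc σ α, (Real.sqrt (W θ))⁻¹ ≤ g θ := by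
    intro θ hθ
    have h1 : s ≤ Real.sin θ := hsinmono θ hθ
    have h2 : 0 ≤ (Real.sqrt (W θ))⁻¹ := hfnn θ
    have h3 : (1:ℝ) ≤ Real.sin θ * s⁻¹ := by
      rw [← div_eq_mul_inv, le_div_iff₀ hs0]; linarith
    have h4 : g θ = Real.sin θ * s⁻¹ * (Real.sqrt (W θ))⁻¹ := by simp only [hgdef, mul_inv]; ring
    calc (Real.sqrt (W θ))⁻¹ = 1 * (Real.sqrt (W θ))⁻¹ := (one_mul _).symm
      _ ≤ Real.sin θ * s⁻¹ * (Real.sqrt (W θ))⁻¹ := mul_le_mul_of_nonneg_right h3 h2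
      _ = g θ := h4.symm
  have hmono := intervalIntegral.integral_mono_on hσα hfint hgint hfg
  -- FTC for g
  set G := fun θ : ℝ => -(1/(a*s)) * Real.log (a * Real.cos θ + Real.sqrt (W θ)) with hGdef
  have hApos : ∀ θ ∈ Icc σ α, 0 < a * Real.cos θ + Real.sqrt (W θ) := by
    intro θ hθ
    have hc : 0 < Real.cos θ :=
      Real.cos_pos_of_mem_Ioo ⟨by linarith [Real.pi_pos, hθ.1], by linarith [hθ.2]⟩
    have := Real.sqrt_nonneg (W θ)
    nlinarith
  have hGcont : ContinuousOn G (Icc σ α) := by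
    simp only [hGdef]
    apply ContinuousOn.mul continuousOn_const
    apply ContinuousOn.log
    · apply Continuous.continuousOn
      apply Continuous.add (continuous_const.mul Real.continuous_cos)
      apply Real.continuous_sqrt.comp
      simp only [hWdef]
      fun_prop
    · intro θ hθ; exact (hApos θ hθ).ne'
  have hGderiv : ∀ x ∈ Ioo σ α, HasDerivWithinAt G (g x) (Ioi x) x := by
    intro x hx
    have hWx : 0 < W x := hWpos x ⟨hx.1.le, hx.2⟩
    have hsW : 0 < Real.sqrt (W x) := Real.sqrt_pos.2 hWx
    have hAx : 0 < a * Real.cos x + Real.sqrt (W x) := hApos x ⟨hx.1.le, hx.2.le⟩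
    have h1 : HasDerivAt (fun t : ℝ => Real.sin t ^ 2) (2 * Real.sin x ^ 1 * Real.cos x) x :=
      (Real.hasDerivAt_sin x).pow 2
    have h2 : HasDerivAt (fun t : ℝ => a ^ 2 * Real.sin t ^ 2)
        (a ^ 2 * (2 * Real.sin x ^ 1 * Real.cos x)) x := h1.const_mul (a ^ 2)
    have h3 : HasDerivAt W (-(a ^ 2 * (2 * Real.sin x ^ 1 * Real.cos x))) x := by
      rw [hWdef]; exact h2.const_sub (R ^ 2)
    have h4 : HasDerivAt (fun t => Real.sqrt (W t))
        (-(a ^ 2 * (2 * Real.sin x ^ 1 * Real.cos x)) / (2 * Real.sqrt (W x))) x :=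
      h3.sqrt hWx.ne'
    have h5 : HasDerivAt (fun t => a * Real.cos t + Real.sqrt (W t))
        (a * (-Real.sin x) + -(a ^ 2 * (2 * Real.sin x ^ 1 * Real.cos x)) / (2 * Real.sqrt (W x))) x :=
      ((Real.hasDerivAt_cos x).const_mul a).add h4
    have h6 := (h5.log hAx.ne').const_mul (-(1/(a*s)))
    have h7 : -(1/(a*s)) * ((a * (-Real.sin x) + -(a ^ 2 * (2 * Real.sin x ^ 1 * Real.cos x)) / (2 * Real.sqrt (W x))) / (a * Real.cos x + Real.sqrt (W x))) = g x := by
      simp only [hgdef]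
      have hW2 : Real.sqrt (W x) * Real.sqrt (W x) = W x := Real.mul_self_sqrt hWx.le
      field_simp
      ring
    have h8 : HasDerivAt G (g x) x := by
      rw [hGdef, ← h7]
      exact h6
    exact h8.hasDerivWithinAt
  have hFTC : (∫ θ in σ..α, g θ) = G α - G σ :=
    intervalIntegral.integral_eq_sub_of_hasDeriv_right_of_le hσα hGcont hGderiv hgint
  -- evaluate and bound G α - G σ
  have hGα : G α = -(1/(a*s)) * Real.log b := by
    simp only [hGdef]
    rw [hWα, Real.sqrt_zero, add_zero, hacosα]
  set Aσ := a * Real.cos σ + Real.sqrt (W σ) with hAσdef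
  have hAσpos : 0 < Aσ := hApos σ ⟨le_refl σ, hσα⟩
  have hGσ : G σ = -(1/(a*s)) * Real.log Aσ := by simp only [hGdef, hAσdef]
  have hcosσα : Real.cos α ≤ Real.cos σ :=
    Real.cos_le_cos_of_nonneg_of_le_pi hσ0.le (by linarith [Real.pi_pos]) hσα
  have hbAσ : b ≤ Aσ := by
    rw [hAσdef, ← hacosα]
    have := Real.sqrt_nonneg (W σ)
    nlinarith
  have hL0 : 0 ≤ Real.log Aσ - Real.log b := by
    have := Real.log_le_log hb0 hbAσ
    linarith
  have hAσle : Aσ ≤ a + R := by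
    rw [hAσdef]
    have h1 : a * Real.cos σ ≤ a := by nlinarith [Real.cos_le_one σ]
    have h2 : Real.sqrt (W σ) ≤ R := by
      have hWle : W σ ≤ R ^ 2 := by
        simp only [hWdef]; nlinarith [sq_nonneg (Real.sin σ)]
      calc Real.sqrt (W σ) ≤ Real.sqrt (R ^ 2) := Real.sqrt_le_sqrt hWle
        _ = R := Real.sqrt_sq hR.le
    linarith
  have hlogAσ : Real.log Aσ ≤ Real.log (a + R) := Real.log_le_log hAσpos hAσle
  -- 2 * (log(a+R) - log b) = log((a+R)/(a-R))
  have hb2 : b ^ 2 = a ^ 2 - R ^ 2 := by rw [hbdef]; exact Real.sq_sqrt (by nlinarith)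
  have h2log : 2 * (Real.log (a + R) - Real.log b) = Real.log ((a + R)/(a - R)) := by
    have h1 : Real.log (a + R) - Real.log b = Real.log ((a + R)/b) :=
      (Real.log_div (by positivity) hb0.ne').symm
    have h2 : ((a + R)/b) ^ 2 = (a + R)/(a - R) := by
      rw [div_pow, hb2]
      rw [div_eq_div_iff (by nlinarith) (by linarith)]
      ring
    rw [h1, ← h2, Real.log_pow]
    norm_num
  have hfrac : 1 + 2 * R / (a - R) = (a + R) / (a - R) := by
    have hab : a - R ≠ 0 := ne_of_gt (by linarith)
    field_simp
    ring
  rw [hfrac]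
  have hGdiff : G α - G σ = (1/(a*s)) * (Real.log Aσ - Real.log b) := by
    rw [hGα, hGσ]; ring
  have hstep1 : (1/(a*s)) * (Real.log Aσ - Real.log b) ≤ (2/R) * (Real.log Aσ - Real.log b) := by
    apply mul_le_mul_of_nonneg_right _ hL0
    rw [div_le_div_iff₀ (by positivity) hR]
    linarith
  have hstep2 : (2/R) * (Real.log Aσ - Real.log b) ≤ (2/R) * (Real.log (a + R) - Real.log b) := by
    apply mul_le_mul_of_nonneg_left _ (by positivity)
    linarith
  have hstep3 : (2/R) * (Real.log (a + R) - Real.log b) = (1/R) * Real.log ((a + R)/(a - R)) := by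
    rw [← h2log]; ring
  calc (∫ θ in σ..α, (Real.sqrt (W θ))⁻¹) ≤ ∫ θ in σ..α, g θ := hmono
    _ = G α - G σ := hFTC
    _ = (1/(a*s)) * (Real.log Aσ - Real.log b) := hGdiff
    _ ≤ (2/R) * (Real.log Aσ - Real.log b) := hstep1
    _ ≤ (2/R) * (Real.log (a + R) - Real.log b) := hstep2
    _ = (1/R) * Real.log ((a + R)/(a - R)) := hstep3

/-- **Lemma 5.4** (grazing-angle integral bound for a circle). Let `0 < R < a`,
`x = (a,0)` and `α = arcsin(R/a)`. For every direction `u = (cos u_θ, sin u_θ)` with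
`u_θ ∈ (0, α]` the set `{τ > 0 : |x − τu| = R}` is nonempty,
`x_b(x,u;R)·u = √(R² − a² sin² u_θ)`, and
`∫_{α/2}^{α} 1/(x_b(x,u;R)·u) du_θ ≤ (1/R) ln(1 + 2R/(a−R))`. -/
theorem circle_grazing_angle_integral (a R : ℝ) (hR : 0 < R) (hRa : R < a) :
    (∀ θ ∈ Set.Ioc (0 : ℝ) (Real.arcsin (R / a)),
        ({τ : ℝ | 0 < τ ∧ ‖vec2 a 0 - τ • vec2 (Real.cos θ) (Real.sin θ)‖ = R}).Nonempty
        ∧ ⟪xbCir a R θ, vec2 (Real.cos θ) (Real.sin θ)⟫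
            = Real.sqrt (R ^ 2 - a ^ 2 * Real.sin θ ^ 2))
    ∧ (∫ θ in (Real.arcsin (R / a) / 2)..(Real.arcsin (R / a)),
          (⟪xbCir a R θ, vec2 (Real.cos θ) (Real.sin θ)⟫)⁻¹)
        ≤ (1 / R) * Real.log (1 + 2 * R / (a - R)) := by
  constructor
  · intro θ hθ
    exact ⟨(part1 a R θ hR hRa hθ).1, (part1 a R θ hR hRa hθ).2.2⟩
  · have hα0 : 0 < Real.arcsin (R / a) :=
      Real.arcsin_pos.2 (div_pos hR (hR.trans hRa))
    have hcong : Set.EqOn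
        (fun θ => (⟪xbCir a R θ, vec2 (Real.cos θ) (Real.sin θ)⟫)⁻¹)
        (fun θ => (Real.sqrt (R ^ 2 - a ^ 2 * Real.sin θ ^ 2))⁻¹)
        (Set.uIcc (Real.arcsin (R / a) / 2) (Real.arcsin (R / a))) := by
      intro θ hθ
      rw [Set.uIcc_of_le (by linarith)] at hθ
      have hmem : θ ∈ Set.Ioc 0 (Real.arcsin (R / a)) := ⟨by linarith [hθ.1], hθ.2⟩
      simp only
      rw [(part1 a R θ hR hRa hmem).2.2]
    rw [intervalIntegral.integral_congr hcong]
    exact part2 a R hR hRa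

end
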